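/- Assume A ⊆ B ⊆ P(ω₁), B is dichotomous, and |B| < 𝔡_{ω₁}. Then Irr_mm(B) = ℵ₁. -/

import Mathlib

open Cardinal Set

universe u
variable {B : Type u} [BooleanAlgebra B]

/-- Membership in the boolean subalgebra of `B` generated by `E`. -/
inductive InGen (E : Set B) : B → Prop
  | base {a : B} : a ∈ E → InGen E a
  | bot : InGen E ⊥
  | compl {a : B} : InGen E a → InGen E aᶜ
  | sup {a b : B} : InGen E a → InGen E b → InGen E (a ⊔ b)

/-- `E` is irredundant. -/
def Irred (E : Set B) : Prop := ∀ a ∈ E, ¬ InGen (E \ {a}) a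

/-- `E` is independent. -/
def Indep (E : Set B) : Prop :=
  ∀ F G : Finset B, ↑F ⊆ E → ↑G ⊆ E → Disjoint F G →
    F.inf id ⊓ G.inf (fun a => aᶜ) ≠ ⊥

/-- `S` is dense in `B`. -/
def DenseSub (S : Set B) : Prop := ∀ b : B, b ≠ ⊥ → ∃ d ∈ S, d ≠ ⊥ ∧ d ≤ b

/-- pi-weight of `B`: least size of a dense subset. -/
noncomputable def piWeight (B : Type u) [BooleanAlgebra B] : Cardinal :=
  sInf {c | ∃ S : Set B, DenseSub S ∧ #S = c}

/-- `E` is a maximal irredundant subset of `B`. -/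
def MaxIrred (E : Set B) : Prop :=
  Irred E ∧ ∀ b : B, b ∉ E → ¬ Irred (insert b E)

/-- least size of a maximal irredundant subset of `B`. -/
noncomputable def irrMM (B : Type u) [BooleanAlgebra B] : Cardinal :=
  sInf {c | ∃ E : Set B, MaxIrred E ∧ #E = c}


/-- A fixed set of size ℵ₁ with its canonical well-order: "ω₁". -/
noncomputable def W : Type := (Cardinal.aleph 1).ord.ToType

noncomputable instance : LinearOrder W := inferInstanceAs (LinearOrder (Cardinal.aleph 1).ord.ToType)

/-- The finite-cofinite algebra on ω₁. -/
def finCofin : Set (Set W) := {b | b.Finite ∨ bᶜ.Finite}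

/-- `S` is (the underlying set of) a subalgebra of `P(ω₁)`. -/
def IsSubalg (S : Set (Set W)) : Prop :=
  ∅ ∈ S ∧ (∀ a ∈ S, aᶜ ∈ S) ∧ ∀ a ∈ S, ∀ b ∈ S, a ∪ b ∈ S

/-- `E` is a maximal irredundant subset of the subalgebra (with carrier) `Bs`. -/
def MaxIrredIn (Bs E : Set (Set W)) : Prop :=
  E ⊆ Bs ∧ Irred E ∧ ∀ b ∈ Bs, b ∉ E → ¬ Irred (insert b E)

/-- `Irr_mm` of a subalgebra of `P(ω₁)` with carrier `Bs`. -/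
noncomputable def irrMMIn (Bs : Set (Set W)) : Cardinal :=
  sInf {c | ∃ E, MaxIrredIn Bs E ∧ #E = c}

/-- pi-weight of a subalgebra of `P(ω₁)` with carrier `Bs`. -/
noncomputable def piIn (Bs : Set (Set W)) : Cardinal :=
  sInf {c | ∃ S, S ⊆ Bs ∧ (∀ b ∈ Bs, b ≠ ∅ → ∃ d ∈ S, d ≠ ∅ ∧ d ⊆ b) ∧ #S = c}

/-- `C` is a closed unbounded subset of ω₁. -/
def IsClubW (C : Set W) : Prop :=
  (∀ α : W, ∃ β ∈ C, α < β) ∧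
    ∀ α : W, (C ∩ Set.Iio α).Nonempty → IsLUB (C ∩ Set.Iio α) α → α ∈ C

/-- `α` and `β` lie in the same `C`-block. -/
def SameBlock (C : Set W) (α β : W) : Prop := ∀ γ ∈ C, (γ ≤ α ↔ γ ≤ β)

/-- `C` is a nice club: all of its blocks are infinite. -/
def NiceClub (C : Set W) : Prop := IsClubW C ∧ ∀ α : W, {β | SameBlock C α β}.Infinite

/-- `b` is a union of `C`-blocks. -/
def BlockUnion (C : Set W) (b : Set W) : Prop :=
  ∀ α β : W, SameBlock C α β → (α ∈ b ↔ β ∈ b)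

/-- `b` is blockish for `C`: both `b` and its complement are unions of ℵ₁ many `C`-blocks. -/
def Blockish (C : Set W) (b : Set W) : Prop :=
  BlockUnion C b ∧ ¬ b.Countable ∧ ¬ bᶜ.Countable

/-- eventual domination: `f α ≤ g α` except on a set of size `< ℵ₁`. -/
def EvDom (f g : W → W) : Prop := {α | ¬ f α ≤ g α}.Countable

/-- the bounding number 𝔟_{ω₁}. -/
noncomputable def bW : Cardinal :=
  sInf {c | ∃ F : Set (W → W), (∀ g, ∃ f ∈ F, ¬ EvDom f g) ∧ #F = c}

/-- the dominating number 𝔡_{ω₁}. -/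
noncomputable def dW : Cardinal :=
  sInf {c | ∃ F : Set (W → W), (∀ g, ∃ f ∈ F, EvDom g f) ∧ #F = c}

/-- `T` splits `X`. -/
def Splits (T X : Set W) : Prop := ¬ (X ∩ T).Countable ∧ ¬ (X \ T).Countable

/-- the reaping number 𝔯_{ω₁}. -/
noncomputable def rW : Cardinal :=
  sInf {c | ∃ R : Set (Set W), (∀ X ∈ R, ¬ X.Countable) ∧
    (∀ T : Set W, ∃ X ∈ R, ¬ Splits T X) ∧ #R = c}

/-- the nice club `C` strongly splits `R`. -/
def StrSplits (C : Set W) (R : Set (Set W)) : Prop :=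
  ∀ b : Set W, Blockish C b → ∀ X ∈ R, Splits b X

/-- the strong reaping number r̂_{ω₁}. -/
noncomputable def rHatW : Cardinal :=
  sInf {c | ∃ R : Set (Set W), (∀ X ∈ R, ¬ X.Countable) ∧
    (∀ C : Set W, NiceClub C → ¬ StrSplits C R) ∧ #R = c}

/-- a subalgebra of `P(ω₁)` is dichotomous iff none of its members is countably infinite. -/
def Dichot (Bs : Set (Set W)) : Prop := ∀ b ∈ Bs, ¬ (b.Countable ∧ b.Infinite)


/-! ### Auxiliary machinery -/

section GenLemmas

variable {γ : Type*}

theorem InGen.mono {G G' : Set (Set γ)} (h : G ⊆ G') {z : Set γ} (hz : InGen G z) :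
    InGen G' z := by
  induction hz with
  | base ha => exact .base (h ha)
  | bot => exact .bot
  | compl _ ih => exact .compl ih
  | sup _ _ ih1 ih2 => exact .sup ih1 ih2

theorem InGen.empty {G : Set (Set γ)} : InGen G (∅ : Set γ) := InGen.bot

theorem InGen.union {G : Set (Set γ)} {x y : Set γ} (hx : InGen G x) (hy : InGen G y) :
    InGen G (x ∪ y) := InGen.sup hx hy

theorem InGen.inter {G : Set (Set γ)} {x y : Set γ} (hx : InGen G x) (hy : InGen G y) :
    InGen G (x ∩ y) := by
  have : x ∩ y = (xᶜ ∪ yᶜ)ᶜ := by ext; simp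
  rw [this]
  exact InGen.compl (InGen.union (InGen.compl hx) (InGen.compl hy))

theorem InGen.diff {G : Set (Set γ)} {x y : Set γ} (hx : InGen G x) (hy : InGen G y) :
    InGen G (x \ y) := by
  rw [Set.diff_eq]
  exact hx.inter hy.compl

theorem InGen.insert_nf {G : Set (Set γ)} {b z : Set γ} (h : InGen (insert b G) z) :
    ∃ x y, InGen G x ∧ InGen G y ∧ z = (x ∩ b) ∪ (y ∩ bᶜ) := by
  induction h with
  | base ha =>
    rcases ha with rfl | ha
    · refine ⟨Set.univ, ∅, ?_, InGen.empty, by ext; simp⟩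
      have : (Set.univ : Set γ) = (∅ : Set γ)ᶜ := by simp
      rw [this]; exact InGen.compl InGen.empty
    · exact ⟨_, _, .base ha, .base ha, by ext x; by_cases hx : x ∈ b <;> simp [hx]⟩
  | bot => exact ⟨∅, ∅, InGen.empty, InGen.empty, by ext; simp⟩
  | compl _ ih =>
    obtain ⟨x, y, hx, hy, rfl⟩ := ih
    exact ⟨xᶜ, yᶜ, hx.compl, hy.compl, by ext w; by_cases hw : w ∈ b <;> simp [hw]⟩
  | sup _ _ ih1 ih2 =>
    obtain ⟨x1, y1, hx1, hy1, rfl⟩ := ih1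
    obtain ⟨x2, y2, hx2, hy2, rfl⟩ := ih2
    exact ⟨x1 ∪ x2, y1 ∪ y2, hx1.union hx2, hy1.union hy2, by
      ext w; by_cases hw : w ∈ b <;> simp [hw]⟩

end GenLemmas

section DNF

variable {γ : Type*} {G : Set (Set γ)}

/-- evaluation of a literal -/
def evalLit (l : (↥G) × Bool) : Set γ := if l.2 then (l.1 : Set γ) else (l.1 : Set γ)ᶜ

/-- evaluation of a clause (conjunction of literals) -/
def evalClause (c : List ((↥G) × Bool)) : Set γ :=
  c.foldr (fun l t => evalLit l ∩ t) Set.univ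

/-- evaluation of a DNF (disjunction of clauses) -/
def evalDNF (L : List (List ((↥G) × Bool))) : Set γ :=
  L.foldr (fun c t => evalClause c ∪ t) ∅

theorem evalDNF_append (L M : List (List ((↥G) × Bool))) :
    evalDNF (L ++ M) = evalDNF L ∪ evalDNF M := by
  induction L with
  | nil => simp [evalDNF]
  | cons c L ih =>
    simp only [List.cons_append, evalDNF, List.foldr_cons] at *
    rw [ih]; ext; simp; tauto

theorem evalClause_append (c d : List ((↥G) × Bool)) :
    evalClause (c ++ d) = evalClause c ∩ evalClause d := by
  induction c with
  | nil => simp [evalClause]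
  | cons l c ih =>
    simp only [List.cons_append, evalClause, List.foldr_cons] at *
    rw [ih]; ext; simp; tauto

/-- distribute: intersection of two DNFs -/
def interDNF (L M : List (List ((↥G) × Bool))) : List (List ((↥G) × Bool)) :=
  L.flatMap (fun c => M.map (fun d => c ++ d))

theorem evalDNF_map_append (c : List ((↥G) × Bool)) (M : List (List ((↥G) × Bool))) :
    evalDNF (M.map (fun d => c ++ d)) = evalClause c ∩ evalDNF M := by
  induction M with
  | nil => simp [evalDNF]
  | cons d M ih =>
    simp only [List.map_cons, evalDNF, List.foldr_cons] at *
    rw [ih, evalClause_append]; ext; simp; tauto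

theorem evalDNF_interDNF (L M : List (List ((↥G) × Bool))) :
    evalDNF (interDNF L M) = evalDNF L ∩ evalDNF M := by
  induction L with
  | nil => simp [evalDNF, interDNF]
  | cons c L ih =>
    simp only [interDNF, List.flatMap_cons] at *
    rw [evalDNF_append, ih, evalDNF_map_append]
    simp only [evalDNF, List.foldr_cons]
    ext; simp; tauto

/-- negation of a clause, as a DNF -/
def negClause (c : List ((↥G) × Bool)) : List (List ((↥G) × Bool)) :=
  c.map (fun l => [(l.1, !l.2)])

theorem evalLit_neg (l : (↥G) × Bool) : evalLit (l.1, !l.2) = (evalLit l)ᶜ := by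
  rcases l with ⟨a, b⟩; cases b <;> simp [evalLit]

theorem evalDNF_negClause (c : List ((↥G) × Bool)) :
    evalDNF (negClause c) = (evalClause c)ᶜ := by
  induction c with
  | nil => simp [negClause, evalDNF, evalClause]
  | cons l c ih =>
    simp only [negClause, List.map_cons, evalDNF, evalClause, List.foldr_cons] at *
    rw [ih, evalLit_neg]
    ext; simp [evalClause]; tauto

/-- negation of a DNF, as a DNF -/
def negDNF : List (List ((↥G) × Bool)) → List (List ((↥G) × Bool))
  | [] => [[]]
  | c :: L => interDNF (negClause c) (negDNF L)

theorem evalDNF_negDNF (L : List (List ((↥G) × Bool))) :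
    evalDNF (negDNF L) = (evalDNF L)ᶜ := by
  induction L with
  | nil => simp [negDNF, evalDNF, evalClause]
  | cons c L ih =>
    simp only [negDNF, evalDNF_interDNF, evalDNF_negClause, ih]
    simp only [evalDNF, List.foldr_cons]
    ext; simp

theorem InGen.exists_dnf {z : Set γ} (h : InGen G z) :
    ∃ L : List (List ((↥G) × Bool)), z = evalDNF L := by
  induction h with
  | base ha => exact ⟨[[(⟨_, ha⟩, true)]], by simp [evalDNF, evalClause, evalLit]⟩
  | bot => exact ⟨[], by simp [evalDNF]⟩
  | compl _ ih =>
    obtain ⟨L, rfl⟩ := ih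
    exact ⟨negDNF L, (evalDNF_negDNF L).symm⟩
  | sup _ _ ih1 ih2 =>
    obtain ⟨L1, rfl⟩ := ih1
    obtain ⟨L2, rfl⟩ := ih2
    exact ⟨L1 ++ L2, (evalDNF_append L1 L2).symm⟩

theorem gen_countable (hG : G.Countable) : {z : Set γ | InGen G z}.Countable := by
  have : Countable ↥G := hG.to_subtype
  have hsub : {z : Set γ | InGen G z} ⊆ Set.range (evalDNF (G := G)) := by
    rintro z hz
    obtain ⟨L, rfl⟩ := InGen.exists_dnf hz
    exact ⟨L, rfl⟩
  exact (Set.countable_range _).mono hsub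

end DNF

/-! ### Order facts about `W` -/

noncomputable instance : WellFoundedLT W :=
  inferInstanceAs (WellFoundedLT (Cardinal.aleph 1).ord.ToType)

theorem mk_W : #W = Cardinal.aleph 1 := Cardinal.mk_ord_toType _

instance : Nonempty W := by
  rw [← Cardinal.mk_ne_zero_iff, mk_W]
  exact ne_of_gt (Cardinal.aleph0_pos.trans Cardinal.aleph0_lt_aleph_one)

theorem countable_Iio (α : W) : (Set.Iio α).Countable := by
  rw [Cardinal.countable_iff_lt_aleph_one]
  exact Cardinal.mk_Iio_ord_toType (c := Cardinal.aleph 1) α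

theorem countable_Iic (α : W) : (Set.Iic α).Countable := by
  have : Set.Iic α = Set.Iio α ∪ {α} := by ext; simp [le_iff_lt_or_eq]
  rw [this]
  exact (countable_Iio α).union (Set.countable_singleton α)

theorem not_countable_W : ¬ (Set.univ : Set W).Countable := by
  rw [Cardinal.countable_iff_lt_aleph_one, Cardinal.mk_univ, mk_W]
  exact lt_irrefl _

theorem exists_gt_of_countable {S : Set W} (hS : S.Countable) : ∃ β : W, ∀ x ∈ S, x < β := by
  by_contra h
  push_neg at h
  apply not_countable_W
  have hsub : (Set.univ : Set W) ⊆ ⋃ x ∈ S, Set.Iic x := by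
    intro β _
    obtain ⟨x, hx, hb⟩ := h β
    exact Set.mem_biUnion hx hb
  exact (hS.biUnion fun x _ => countable_Iic x).mono hsub

theorem unbounded_of_not_countable {b : Set W} (hb : ¬ b.Countable) (α : W) :
    ∃ p ∈ b, α < p := by
  by_contra h
  push_neg at h
  exact hb ((countable_Iic α).mono h)

/-- the minimum of a nonempty subset of `W` -/
noncomputable def setMin (S : Set W) (hS : S.Nonempty) : W :=
  (wellFounded_lt (α := W)).min S hS

theorem setMin_mem (S : Set W) (hS : S.Nonempty) : setMin S hS ∈ S :=
  WellFounded.min_mem _ S hS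

theorem setMin_le (S : Set W) (hS : S.Nonempty) {x : W} (hx : x ∈ S) : setMin S hS ≤ x :=
  not_lt.1 (WellFounded.not_lt_min _ S hx)

/-! ### Lower bound: maximal irredundant families are uncountable -/

theorem symmdiff_helper {a y : Set W} {α : W}
    (h : ∀ β : W, β ≠ α → (β ∈ a ↔ β ∈ y)) : (y \ a) ∪ (a \ y) ⊆ {α} := by
  intro β hβ
  by_contra hne
  have hne' : β ≠ α := hne
  rcases hβ with ⟨h1, h2⟩ | ⟨h1, h2⟩
  · exact h2 ((h β hne').2 h1)
  · exact h2 ((h β hne').1 h1)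

theorem maxIrred_not_countable {Bs E : Set (Set W)} (hA : finCofin ⊆ Bs)
    (hE : MaxIrredIn Bs E) : ¬ E.Countable := by
  intro hEc
  have hgen : {z : Set W | InGen E z}.Countable := gen_countable hEc
  set Bad2 : Set W := {α : W | InGen E ({α} : Set W)} with hBad2def
  have hBad2 : Bad2.Countable := by
    have hsub : Bad2 ⊆ (fun α : W => ({α} : Set W)) ⁻¹' {z : Set W | InGen E z} :=
      fun α h => h
    exact (hgen.preimage Set.singleton_injective).mono hsub
  set Bad : Set W := ⋃ e ∈ E, {α : W | ∃ y, InGen (E \ {e}) y ∧ (y \ e) ∪ (e \ y) = {α}}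
    with hBaddef
  have hBad : Bad.Countable := by
    refine Set.Countable.biUnion hEc (fun e _ => ?_)
    have hsub : {α : W | ∃ y, InGen (E \ {e}) y ∧ (y \ e) ∪ (e \ y) = {α}} ⊆
        (fun α : W => ({α} : Set W)) ⁻¹' ((fun y : Set W => (y \ e) ∪ (e \ y)) ''
          {z : Set W | InGen E z}) := by
      rintro α ⟨y, hy, hyd⟩
      exact ⟨y, hy.mono Set.diff_subset, hyd⟩
    exact ((hgen.image _).preimage Set.singleton_injective).mono hsub
  obtain ⟨α, hα⟩ : ∃ α : W, α ∉ Bad2 ∪ Bad := by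
    by_contra h
    push_neg at h
    exact not_countable_W ((hBad2.union hBad).mono (fun β _ => h β))
  have hα2 : α ∉ Bad2 := fun h => hα (Or.inl h)
  have hαB : α ∉ Bad := fun h => hα (Or.inr h)
  have hsing_not_mem : ({α} : Set W) ∉ E := fun h => hα2 (InGen.base h)
  have hirr : Irred (insert ({α} : Set W) E) := by
    intro a ha
    rcases Set.mem_insert_iff.1 ha with rfl | haE
    · rw [Set.insert_diff_self_of_notMem hsing_not_mem]
      exact hα2
    · have hane : ({α} : Set W) ≠ a := fun h => hsing_not_mem (h ▸ haE)
      rw [← Set.insert_diff_singleton_comm hane E]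
      intro hcontr
      obtain ⟨x, y, hx, hy, heq⟩ := InGen.insert_nf hcontr
      have hkey : ∀ β : W, β ≠ α → (β ∈ a ↔ β ∈ y) := by
        intro β hβ
        rw [heq]
        simp only [Set.mem_union, Set.mem_inter_iff, Set.mem_singleton_iff, Set.mem_compl_iff]
        constructor
        · rintro (⟨_, h2⟩ | ⟨h1, _⟩)
          · exact absurd h2 hβ
          · exact h1
        · intro h1
          exact Or.inr ⟨h1, hβ⟩
      have hsub := symmdiff_helper hkey
      rcases Set.eq_empty_or_nonempty ((y \ a) ∪ (a \ y)) with hemp | hne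
      · have : y = a := by
          ext β
          constructor
          · intro hb
            by_contra hba
            exact absurd (Set.mem_union_left _ ((Set.mem_diff β).2 ⟨hb, hba⟩)) (hemp ▸ Set.notMem_empty β)
          · intro hb
            by_contra hba
            exact absurd (Set.mem_union_right _ ((Set.mem_diff β).2 ⟨hb, hba⟩)) (hemp ▸ Set.notMem_empty β)
        exact hE.2.1 a haE (this ▸ hy)
      · have heq2 : (y \ a) ∪ (a \ y) = {α} :=
          Set.eq_singleton_iff_nonempty_unique_mem.2 ⟨hne, fun β hβ => hsub hβ⟩
        exact hαB (Set.mem_biUnion haE ⟨y, hy, heq2⟩)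
  have hmem : ({α} : Set W) ∈ Bs := hA (Or.inl (Set.finite_singleton α))
  exact hE.2.2 _ hmem hsing_not_mem hirr

theorem maxIrred_aleph_one_le {Bs E : Set (Set W)} (hA : finCofin ⊆ Bs)
    (hE : MaxIrredIn Bs E) : Cardinal.aleph 1 ≤ #E := by
  by_contra h
  exact maxIrred_not_countable hA hE ((Cardinal.countable_iff_lt_aleph_one E).2 (not_le.1 h))


/-! ### Blocks from a function g -/

section Blocks

variable (g : W → W)

theorem bnd_exists (α : W) :
    {β : W | α < β ∧ (∀ x ≤ α, g x < β) ∧ (Set.Ico α β).Infinite}.Nonempty := by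
  have hstep : ∀ δ : W, ∃ β : W, δ < β ∧ ∀ x ≤ δ, g x < β := by
    intro δ
    obtain ⟨β, hβ⟩ := exists_gt_of_countable
      ((countable_Iic δ).insert δ |>.union ((countable_Iic δ).image g))
    refine ⟨β, hβ δ (Or.inl (Set.mem_insert δ _)), fun x hx => hβ (g x) (Or.inr ⟨x, hx, rfl⟩)⟩
  choose G1 hG1a hG1b using hstep
  set t : ℕ → W := fun n => G1^[n + 1] α with ht
  have htsucc : ∀ n, t (n + 1) = G1 (t n) := by
    intro n
    simp only [ht, Function.iterate_succ_apply']
  have htmono : StrictMono t := by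
    apply strictMono_nat_of_lt_succ
    intro n
    rw [htsucc]
    exact hG1a (t n)
  obtain ⟨β, hβ⟩ := exists_gt_of_countable (Set.countable_range t)
  have htβ : ∀ n, t n < β := fun n => hβ (t n) ⟨n, rfl⟩
  have hαt : ∀ n, α < t n := by
    intro n
    induction n with
    | zero => exact hG1a α
    | succ n ih => exact ih.trans (htmono (Nat.lt_succ_self n))
  refine ⟨β, (hαt 0).trans (htβ 0), fun x hx => (hG1b α x hx).trans (htβ 0), ?_⟩
  · apply Set.infinite_of_injective_forall_mem htmono.injective
    intro n
    exact ⟨le_of_lt (hαt n), htβ n⟩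

/-- a fast-growing bound function built from `g` -/
noncomputable def bnd (α : W) : W :=
  setMin _ (bnd_exists g α)

theorem bnd_gt (α : W) : α < bnd g α := (setMin_mem _ (bnd_exists g α)).1

theorem bnd_g {α x : W} (hx : x ≤ α) : g x < bnd g α :=
  (setMin_mem _ (bnd_exists g α)).2.1 x hx

theorem bnd_ico (α : W) : (Set.Ico α (bnd g α)).Infinite :=
  (setMin_mem _ (bnd_exists g α)).2.2

theorem bnd_mono {α α' : W} (h : α ≤ α') : bnd g α ≤ bnd g α' := by
  apply setMin_le
  refine ⟨h.trans_lt (bnd_gt g α'), fun x hx => bnd_g g (hx.trans h), ?_⟩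
  exact (bnd_ico g α').mono (Set.Ico_subset_Ico_left h)

/-- the club of closure points of `bnd g` -/
def clubC : Set W := {γ : W | ∀ α < γ, bnd g α < γ}

theorem clubC_unbounded (δ : W) : ∃ γ ∈ clubC g, δ < γ := by
  set t : ℕ → W := fun n => (bnd g)^[n] δ with ht
  have htsucc : ∀ n, t (n + 1) = bnd g (t n) := by
    intro n
    simp only [ht, Function.iterate_succ_apply']
  have htmono : StrictMono t := by
    apply strictMono_nat_of_lt_succ
    intro n
    rw [htsucc]
    exact bnd_gt g (t n)
  obtain ⟨β₀, hβ₀⟩ := exists_gt_of_countable (Set.countable_range t)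
  have hne : {β : W | ∀ n, t n < β}.Nonempty := ⟨β₀, fun n => hβ₀ (t n) ⟨n, rfl⟩⟩
  set γ := setMin _ hne with hγ
  have hγmem : ∀ n, t n < γ := setMin_mem _ hne
  refine ⟨γ, ?_, ?_⟩
  · intro α hα
    have hex : ∃ n, α < t n := by
      by_contra hno
      push_neg at hno
      have : ∀ n, t n < α := fun n => (htmono (Nat.lt_succ_self n)).trans_le (hno (n + 1))
      exact absurd (setMin_le _ hne this) (not_le.2 hα)
    obtain ⟨n, hn⟩ := hex
    calc bnd g α ≤ bnd g (t n) := bnd_mono g (le_of_lt hn)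
    _ = t (n + 1) := (htsucc n).symm
    _ < γ := hγmem (n + 1)
  · have : t 0 = δ := rfl
    exact this ▸ hγmem 0

theorem clubC_nonempty_above (α : W) : {γ : W | γ ∈ clubC g ∧ α < γ}.Nonempty := by
  obtain ⟨γ, h1, h2⟩ := clubC_unbounded g α
  exact ⟨γ, h1, h2⟩

/-- the next club point strictly above α -/
noncomputable def nextC (α : W) : W := setMin _ (clubC_nonempty_above g α)

theorem nextC_mem (α : W) : nextC g α ∈ clubC g := (setMin_mem _ (clubC_nonempty_above g α)).1

theorem lt_nextC (α : W) : α < nextC g α := (setMin_mem _ (clubC_nonempty_above g α)).2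

theorem nextC_le {α γ : W} (hγ : γ ∈ clubC g) (h : α < γ) : nextC g α ≤ γ :=
  setMin_le _ (clubC_nonempty_above g α) ⟨hγ, h⟩

/-- same block relation -/
def sameC (α β : W) : Prop := ∀ γ ∈ clubC g, (γ ≤ α ↔ γ ≤ β)

theorem sameC_refl (α : W) : sameC g α α := fun _ _ => Iff.rfl

theorem sameC_symm {α β : W} (h : sameC g α β) : sameC g β α := fun γ hγ => (h γ hγ).symm

theorem sameC_trans {α β δ : W} (h1 : sameC g α β) (h2 : sameC g β δ) : sameC g α δ :=
  fun γ hγ => (h1 γ hγ).trans (h2 γ hγ)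

/-- the block of α -/
def blockOf (α : W) : Set W := {β : W | sameC g α β}

theorem mem_blockOf_self (α : W) : α ∈ blockOf g α := sameC_refl g α

theorem blockOf_eq {α β : W} (h : sameC g α β) : blockOf g α = blockOf g β := by
  ext δ
  exact ⟨fun hδ => sameC_trans g (sameC_symm g h) hδ, fun hδ => sameC_trans g h hδ⟩

theorem blockOf_subset_Iio (α : W) : blockOf g α ⊆ Set.Iio (nextC g α) := by
  intro β hβ
  rw [Set.mem_Iio]
  by_contra hge
  push_neg at hge
  exact absurd ((hβ (nextC g α) (nextC_mem g α)).2 hge) (not_le.2 (lt_nextC g α))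

theorem blockOf_countable (α : W) : (blockOf g α).Countable :=
  (countable_Iio (nextC g α)).mono (blockOf_subset_Iio g α)

theorem Ico_subset_blockOf (α : W) : Set.Ico α (nextC g α) ⊆ blockOf g α := by
  rintro β ⟨h1, h2⟩ γ hγ
  constructor
  · intro hγα
    exact hγα.trans h1
  · intro hγβ
    by_contra hαγ
    push_neg at hαγ
    exact absurd (hγβ.trans_lt h2) (not_lt.2 (nextC_le g hγ hαγ))

theorem blockOf_infinite (α : W) : (blockOf g α).Infinite := by
  have h1 : bnd g α ≤ nextC g α := le_of_lt ((nextC_mem g α) α (lt_nextC g α))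
  exact ((bnd_ico g α).mono (Set.Ico_subset_Ico_right h1)).mono (Ico_subset_blockOf g α)

/-- representative (least element) of the block of α -/
noncomputable def repOf (α : W) : W := setMin _ ⟨α, mem_blockOf_self g α⟩

theorem repOf_mem (α : W) : repOf g α ∈ blockOf g α := setMin_mem _ _

theorem repOf_sameC (α : W) : sameC g α (repOf g α) := repOf_mem g α

theorem repOf_congr {α β : W} (h : sameC g α β) : repOf g α = repOf g β := by
  unfold repOf
  congr 1
  exact blockOf_eq g h

theorem blockOf_repOf (α : W) : blockOf g (repOf g α) = blockOf g α :=
  (blockOf_eq g (repOf_sameC g α)).symm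

theorem repOf_idem (α : W) : repOf g (repOf g α) = repOf g α :=
  (repOf_congr g (repOf_sameC g α)).symm

theorem rep_eq_of_mem_range {v : W} (hv : v ∈ Set.range (repOf g)) : repOf g v = v := by
  obtain ⟨x, rfl⟩ := hv
  exact repOf_idem g x

theorem blocks_disjoint {v v' : W} (hv : v ∈ Set.range (repOf g))
    (hv' : v' ∈ Set.range (repOf g)) (hne : v ≠ v') {u : W}
    (hu : u ∈ blockOf g v) (hu' : u ∈ blockOf g v') : False := by
  have h1 : sameC g v v' := sameC_trans g hu (sameC_symm g hu')
  have := (rep_eq_of_mem_range g hv).symm.trans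
    ((repOf_congr g h1).trans (rep_eq_of_mem_range g hv'))
  exact hne this

end Blocks

/-! ### The family E built from blocks -/

section Fam

variable (g : W → W)

theorem block_denum (α : W) : Nonempty (ℕ ≃ ↥(blockOf g α)) := by
  have h1 : Countable ↥(blockOf g α) := (blockOf_countable g α).to_subtype
  have h2 : Infinite ↥(blockOf g α) := (blockOf_infinite g α).to_subtype
  exact nonempty_equiv_of_countable

/-- an enumeration of the block of v -/
noncomputable def enumB (v : W) : ℕ ≃ ↥(blockOf g v) := Classical.choice (block_denum g v)

/-- the n-th initial segment of the block of v -/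
def seg (v : W) (n : ℕ) : Set W := (fun k => ((enumB g v k : W))) '' {k : ℕ | k ≤ n}

theorem mem_seg {v : W} {n : ℕ} {w : W} :
    w ∈ seg g v n ↔ ∃ k ≤ n, (enumB g v k : W) = w := by
  simp [seg]

theorem enumB_mem_seg {v : W} {m n : ℕ} :
    (enumB g v m : W) ∈ seg g v n ↔ m ≤ n := by
  rw [mem_seg]
  constructor
  · rintro ⟨k, hk, heq⟩
    have : enumB g v k = enumB g v m := Subtype.coe_injective heq
    rwa [(enumB g v).injective this] at hk
  · intro h
    exact ⟨m, h, rfl⟩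

theorem seg_subset_block (v : W) (n : ℕ) : seg g v n ⊆ blockOf g v := by
  rintro w ⟨k, _, rfl⟩
  exact (enumB g v k).2

theorem seg_finite (v : W) (n : ℕ) : (seg g v n).Finite :=
  (Set.finite_Iic n).image _

theorem seg_inj {v : W} {n m : ℕ} (h : seg g v n = seg g v m) : n = m := by
  have h1 : (enumB g v n : W) ∈ seg g v m := h ▸ (enumB_mem_seg g).2 le_rfl
  have h2 : (enumB g v m : W) ∈ seg g v n := h ▸ (enumB_mem_seg g).2 le_rfl
  exact le_antisymm ((enumB_mem_seg g).1 h1) ((enumB_mem_seg g).1 h2)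

/-- the family E -/
def famE : Set (Set W) := {s : Set W | ∃ v ∈ Set.range (repOf g), ∃ n : ℕ, s = seg g v n}

theorem famE_subset_finCofin : famE g ⊆ finCofin := by
  rintro s ⟨v, _, n, rfl⟩
  exact Or.inl (seg_finite g v n)

theorem famE_irred : Irred (famE g) := by
  rintro a ⟨v, hv, n, rfl⟩ hgen
  have hkey : ∀ z : Set W, InGen (famE g \ {seg g v n}) z →
      ((enumB g v n : W) ∈ z ↔ (enumB g v (n + 1) : W) ∈ z) := by
    intro z hz
    induction hz with
    | base ha =>
      obtain ⟨⟨v', hv', m, rfl⟩, hne⟩ := ha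
      by_cases hvv : v' = v
      · subst hvv
        have hm : m ≠ n := fun h => hne (by rw [h]; rfl)
        rw [enumB_mem_seg g, enumB_mem_seg g]
        omega
      · constructor
        · intro hmem
          exact absurd (seg_subset_block g v' m hmem)
            (fun hc => blocks_disjoint g hv' hv hvv hc
              (enumB g v n).2)
        · intro hmem
          exact absurd (seg_subset_block g v' m hmem)
            (fun hc => blocks_disjoint g hv' hv hvv hc
              (enumB g v (n + 1)).2)
    | bot => exact Iff.rfl
    | compl _ ih => simp only [Set.mem_compl_iff]; exact not_congr ih
    | sup _ _ ih1 ih2 => simp only [Set.sup_eq_union, Set.mem_union]; exact or_congr ih1 ih2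
  have h1 : (enumB g v n : W) ∈ seg g v n := (enumB_mem_seg g).2 le_rfl
  have h2 : (enumB g v (n + 1) : W) ∉ seg g v n := by
    rw [enumB_mem_seg g]; omega
  exact h2 ((hkey _ hgen).1 h1)

theorem seg_zero (v : W) : seg g v 0 = {(enumB g v 0 : W)} := by
  ext w
  rw [mem_seg]
  simp [eq_comm]

theorem seg_succ_diff (v : W) (k : ℕ) :
    seg g v (k + 1) \ seg g v k = {(enumB g v (k + 1) : W)} := by
  ext w
  simp only [Set.mem_diff, mem_seg, Set.mem_singleton_iff]
  constructor
  · rintro ⟨⟨j, hj, rfl⟩, hnot⟩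
    have : ¬ j ≤ k := fun hc => hnot ⟨j, hc, rfl⟩
    have : j = k + 1 := by omega
    rw [this]
  · rintro rfl
    refine ⟨⟨k + 1, le_rfl, rfl⟩, ?_⟩
    rintro ⟨j, hj, heq⟩
    have := (enumB g v).injective (Subtype.coe_injective heq)
    omega

theorem seg_mem_famE (v : W) (hv : v ∈ Set.range (repOf g)) (n : ℕ) : seg g v n ∈ famE g :=
  ⟨v, hv, n, rfl⟩

theorem singleton_inGen (w : W) : InGen (famE g) ({w} : Set W) := by
  set v := repOf g w with hv
  have hvr : v ∈ Set.range (repOf g) := ⟨w, rfl⟩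
  have hwb : w ∈ blockOf g v := by
    rw [hv, blockOf_repOf]
    exact mem_blockOf_self g w
  obtain ⟨k, hk⟩ := (enumB g v).surjective ⟨w, hwb⟩
  have hkw : (enumB g v k : W) = w := by rw [hk]
  cases k with
  | zero =>
    have : ({w} : Set W) = seg g v 0 := by rw [seg_zero, hkw]
    rw [this]
    exact .base (seg_mem_famE g v hvr 0)
  | succ k =>
    have : ({w} : Set W) = seg g v (k + 1) \ seg g v k := by rw [seg_succ_diff, hkw]
    rw [this]
    exact InGen.diff (.base (seg_mem_famE g v hvr (k + 1))) (.base (seg_mem_famE g v hvr k))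

theorem finite_inGen {s : Set W} (hs : s.Finite) : InGen (famE g) s := by
  refine Set.Finite.induction_on (motive := fun s _ => InGen (famE g) s) s hs InGen.empty ?_
  intro a s' _ _ ih
  rw [Set.insert_eq]
  exact (singleton_inGen g _).union ih

theorem finCofin_inGen {s : Set W} (hs : s ∈ finCofin) : InGen (famE g) s := by
  rcases hs with h | h
  · exact finite_inGen g h
  · have : s = (sᶜ)ᶜ := (compl_compl s).symm
    rw [this]
    exact (finite_inGen g h).compl

end Fam

/-! ### Catching sets that split a block -/

section Catch

variable (g : W → W)

/-- the pair {e_k, e_{k+1}} as a set -/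
def pairB (v : W) (k : ℕ) : Set W := {(enumB g v k : W), (enumB g v (k + 1) : W)}

theorem pairB_eq_zero (v : W) : pairB g v 0 = seg g v 1 := by
  ext w
  simp only [pairB, mem_seg, Set.mem_insert_iff, Set.mem_singleton_iff]
  constructor
  · rintro (rfl | rfl)
    · exact ⟨0, by omega, rfl⟩
    · exact ⟨1, le_rfl, rfl⟩
  · rintro ⟨j, hj, rfl⟩
    interval_cases j
    · exact Or.inl rfl
    · exact Or.inr rfl

theorem pairB_eq_succ (v : W) (k : ℕ) : pairB g v (k + 1) = seg g v (k + 2) \ seg g v k := by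
  ext w
  simp only [pairB, Set.mem_diff, mem_seg, Set.mem_insert_iff, Set.mem_singleton_iff]
  constructor
  · rintro (rfl | rfl)
    · refine ⟨⟨k + 1, by omega, rfl⟩, ?_⟩
      rintro ⟨j, hj, heq⟩
      have := (enumB g v).injective (Subtype.coe_injective heq)
      omega
    · refine ⟨⟨k + 2, le_rfl, rfl⟩, ?_⟩
      rintro ⟨j, hj, heq⟩
      have := (enumB g v).injective (Subtype.coe_injective heq)
      omega
  · rintro ⟨⟨j, hj, rfl⟩, hnot⟩
    have : ¬ j ≤ k := fun hc => hnot ⟨j, hc, rfl⟩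
    have hj2 : j = k + 1 ∨ j = k + 2 := by omega
    rcases hj2 with rfl | rfl
    · exact Or.inl rfl
    · exact Or.inr rfl

theorem pairB_inGen {v : W} (hv : v ∈ Set.range (repOf g)) (k : ℕ) :
    InGen (famE g \ {seg g v k}) (pairB g v k) := by
  cases k with
  | zero =>
    rw [pairB_eq_zero]
    refine .base ⟨seg_mem_famE g v hv 1, ?_⟩
    simp only [Set.mem_singleton_iff]
    intro h
    exact absurd (seg_inj g h) (by omega)
  | succ k =>
    rw [pairB_eq_succ]
    refine InGen.diff (.base ⟨seg_mem_famE g v hv (k + 2), ?_⟩)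
      (.base ⟨seg_mem_famE g v hv k, ?_⟩) <;>
      · simp only [Set.mem_singleton_iff]
        intro h
        exact absurd (seg_inj g h) (by omega)

theorem segk_lower_inGen {v : W} (hv : v ∈ Set.range (repOf g)) (k : ℕ) :
    InGen (famE g \ {seg g v (k + 1)}) (seg g v k) := by
  refine .base ⟨seg_mem_famE g v hv k, ?_⟩
  simp only [Set.mem_singleton_iff]
  intro h
  exact absurd (seg_inj g h) (by omega)

theorem seg_succ_union_pair (v : W) (k : ℕ) :
    seg g v (k + 1) = seg g v k ∪ {(enumB g v (k + 1) : W)} := by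
  ext w
  simp only [Set.mem_union, mem_seg, Set.mem_singleton_iff]
  constructor
  · rintro ⟨j, hj, rfl⟩
    by_cases hjk : j ≤ k
    · exact Or.inl ⟨j, hjk, rfl⟩
    · have : j = k + 1 := by omega
      rw [this]
      exact Or.inr rfl
  · rintro (⟨j, hj, rfl⟩ | rfl)
    · exact ⟨j, by omega, rfl⟩
    · exact ⟨k + 1, le_rfl, rfl⟩

theorem catch_lemma {b : Set W} {v : W} (hv : v ∈ Set.range (repOf g)) {k : ℕ}
    (hflip : ((enumB g v k : W) ∈ b ∧ (enumB g v (k + 1) : W) ∉ b) ∨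
      ((enumB g v k : W) ∉ b ∧ (enumB g v (k + 1) : W) ∈ b)) :
    InGen (insert b (famE g \ {seg g v k})) (seg g v k) := by
  have hb : InGen (insert b (famE g \ {seg g v k})) b := .base (Set.mem_insert b _)
  have hpair : InGen (insert b (famE g \ {seg g v k})) (pairB g v k) :=
    (pairB_inGen g hv k).mono (Set.subset_insert _ _)
  have hlow : InGen (insert b (famE g \ {seg g v k})) (seg g v k \ {(enumB g v k : W)}) := by
    cases k with
    | zero =>
      have : seg g v 0 \ {(enumB g v 0 : W)} = ∅ := by
        rw [seg_zero]
        simp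
      rw [this]
      exact InGen.empty
    | succ k =>
      have h1 : seg g v (k + 1) \ {(enumB g v (k + 1) : W)} = seg g v k := by
        rw [seg_succ_union_pair g v k]
        rw [Set.union_diff_right]
        apply Set.diff_singleton_eq_self
        rw [enumB_mem_seg g]
        omega
      rw [h1]
      exact (segk_lower_inGen g hv k).mono (Set.subset_insert _ _)
  have hsingle : InGen (insert b (famE g \ {seg g v k})) ({(enumB g v k : W)} : Set W) := by
    rcases hflip with ⟨h1, h2⟩ | ⟨h1, h2⟩
    · have heq : ({(enumB g v k : W)} : Set W) = pairB g v k ∩ b := by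
        ext w
        simp only [Set.mem_singleton_iff, Set.mem_inter_iff, pairB, Set.mem_insert_iff]
        constructor
        · rintro rfl
          exact ⟨Or.inl rfl, h1⟩
        · rintro ⟨rfl | rfl, hw⟩
          · rfl
          · exact absurd hw h2
      rw [heq]
      exact hpair.inter hb
    · have heq : ({(enumB g v k : W)} : Set W) = pairB g v k \ b := by
        ext w
        simp only [Set.mem_singleton_iff, pairB, Set.mem_diff, Set.mem_insert_iff]
        constructor
        · rintro rfl
          exact ⟨Or.inl rfl, h1⟩
        · rintro ⟨rfl | rfl, hw⟩
          · rfl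
          · exact absurd h2 hw
      rw [heq]
      exact hpair.diff hb
  have hfinal : seg g v k = (seg g v k \ {(enumB g v k : W)}) ∪ {(enumB g v k : W)} := by
    rw [Set.diff_union_self]
    apply (Set.union_eq_self_of_subset_right _).symm
    intro w hw
    rw [Set.mem_singleton_iff] at hw
    subst hw
    exact (enumB_mem_seg g).2 le_rfl
  have hres := hlow.union hsingle
  rwa [← hfinal] at hres

theorem flip_exists {b : Set W} {p q : W} (hpq : sameC g p q) (hp : p ∈ b) (hq : q ∉ b) :
    ∃ v ∈ Set.range (repOf g), ∃ k : ℕ,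
      ((enumB g v k : W) ∈ b ∧ (enumB g v (k + 1) : W) ∉ b) ∨
      ((enumB g v k : W) ∉ b ∧ (enumB g v (k + 1) : W) ∈ b) := by
  set v := repOf g p with hvdef
  have hvr : v ∈ Set.range (repOf g) := ⟨p, rfl⟩
  have hpb : p ∈ blockOf g v := by
    rw [hvdef, blockOf_repOf]
    exact mem_blockOf_self g p
  have hqb : q ∈ blockOf g v := by
    rw [hvdef, blockOf_repOf]
    exact hpq
  obtain ⟨i, hi⟩ := (enumB g v).surjective ⟨p, hpb⟩
  obtain ⟨j, hj⟩ := (enumB g v).surjective ⟨q, hqb⟩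
  refine ⟨v, hvr, ?_⟩
  by_contra hno
  push_neg at hno
  have hiff : ∀ k : ℕ, ((enumB g v k : W) ∈ b ↔ (enumB g v (k + 1) : W) ∈ b) := by
    intro k
    have := hno k
    tauto
  have hall : ∀ k : ℕ, ((enumB g v k : W) ∈ b ↔ (enumB g v 0 : W) ∈ b) := by
    intro k
    induction k with
    | zero => exact Iff.rfl
    | succ k ih => exact (hiff k).symm.trans ih
  have hpi : (enumB g v i : W) = p := by rw [hi]
  have hqj : (enumB g v j : W) = q := by rw [hj]
  have h1 : (enumB g v 0 : W) ∈ b := (hall i).1 (hpi ▸ hp)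
  exact hq (hqj ▸ ((hall j).2 h1))

end Catch

/-! ### Choice of a good g via the dominating number -/

theorem exists_good_g (Bs : Set (Set W)) (hsub : IsSubalg Bs) (hdich : Dichot Bs)
    (hsize : #Bs < dW) :
    ∃ g : W → W, ∀ b ∈ Bs, ¬ b.Finite → ¬ bᶜ.Finite →
      ∃ p q : W, sameC g p q ∧ p ∈ b ∧ q ∉ b := by
  classical
  set B2 : Set (Set W) := {b ∈ Bs | ¬ b.Countable ∧ ¬ bᶜ.Countable} with hB2
  have hQ : ∀ b ∈ B2, ∀ δ : W, ∃ β : W,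
      ∃ p q : W, p ∈ b ∧ q ∉ b ∧ δ < p ∧ δ < q ∧ p < β ∧ q < β := by
    intro b hb δ
    obtain ⟨p, hp, hδp⟩ := unbounded_of_not_countable hb.2.1 δ
    obtain ⟨q, hq, hδq⟩ := unbounded_of_not_countable hb.2.2 δ
    obtain ⟨β, hβ⟩ := exists_gt_of_countable ((Set.countable_singleton p).insert q)
    exact ⟨β, p, q, hp, hq, hδp, hδq, hβ p (Or.inr rfl), hβ q (Or.inl rfl)⟩
  choose! H hH using hQ
  set F : Set (W → W) := H '' B2 with hF
  have hFle : #F ≤ #Bs :=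
    le_trans Cardinal.mk_image_le (Cardinal.mk_le_mk_of_subset (Set.sep_subset _ _))
  have hnotdom : ¬ ∀ gg : W → W, ∃ f ∈ F, EvDom gg f := by
    intro hdom
    have hle : dW ≤ #F := csInf_le' ⟨F, hdom, rfl⟩
    exact absurd (hle.trans hFle) (not_le.2 hsize)
  push_neg at hnotdom
  obtain ⟨g, hg⟩ := hnotdom
  refine ⟨g, ?_⟩
  intro b hbBs hbf hbcf
  have hbc : ¬ b.Countable := fun hc => (hdich b hbBs) ⟨hc, hbf⟩
  have hbcc : ¬ bᶜ.Countable := fun hc => (hdich bᶜ (hsub.2.1 b hbBs)) ⟨hc, hbcf⟩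
  have hb2 : b ∈ B2 := ⟨hbBs, hbc, hbcc⟩
  have hnd : ¬ EvDom g (H b) := hg (H b) ⟨b, hb2, rfl⟩
  have hne : {α : W | ¬ g α ≤ H b α}.Nonempty := by
    rcases Set.eq_empty_or_nonempty {α : W | ¬ g α ≤ H b α} with h | h
    · exact absurd (by rw [EvDom, h]; exact Set.countable_empty) hnd
    · exact h
  obtain ⟨δ, hδ⟩ := hne
  have hδ' : H b δ < g δ := not_le.1 hδ
  obtain ⟨p, q, hp, hq, hδp, hδq, hpβ, hqβ⟩ := hH b hb2 δ
  have hgb : g δ < bnd g δ := bnd_g g le_rfl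
  have hpg : p < bnd g δ := hpβ.trans (hδ'.trans hgb)
  have hqg : q < bnd g δ := hqβ.trans (hδ'.trans hgb)
  refine ⟨p, q, ?_, hp, hq⟩
  intro γ hγ
  by_cases hγδ : γ ≤ δ
  · exact ⟨fun _ => hγδ.trans (le_of_lt hδq), fun _ => hγδ.trans (le_of_lt hδp)⟩
  · push_neg at hγδ
    have hbndγ : bnd g δ < γ := hγ δ hγδ
    constructor
    · intro hle
      exact absurd hle (not_le.2 (hpg.trans hbndγ))
    · intro hle
      exact absurd hle (not_le.2 (hqg.trans hbndγ))

/-! ### The constructed family is maximal irredundant -/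

theorem famE_maxIrred (Bs : Set (Set W)) (hsub : IsSubalg Bs) (hA : finCofin ⊆ Bs)
    (hdich : Dichot Bs) (hsize : #Bs < dW) :
    ∃ E : Set (Set W), MaxIrredIn Bs E ∧ #E ≤ Cardinal.aleph 1 := by
  obtain ⟨g, hg⟩ := exists_good_g Bs hsub hdich hsize
  refine ⟨famE g, ⟨fun s hs => hA (famE_subset_finCofin g hs), famE_irred g, ?_⟩, ?_⟩
  · intro b hbBs hbE hirr
    by_cases hfc : b ∈ finCofin
    · exact hirr b (Set.mem_insert b _)
        (by rw [Set.insert_diff_self_of_notMem hbE]; exact finCofin_inGen g hfc)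
    · have hbf : ¬ b.Finite := fun h => hfc (Or.inl h)
      have hbcf : ¬ bᶜ.Finite := fun h => hfc (Or.inr h)
      obtain ⟨p, q, hpq, hp, hq⟩ := hg b hbBs hbf hbcf
      obtain ⟨v, hv, k, hflip⟩ := flip_exists g hpq hp hq
      have hbne : b ≠ seg g v k := fun h => hbf (h ▸ seg_finite g v k)
      have hsegmem : seg g v k ∈ insert b (famE g) :=
        Set.mem_insert_of_mem b (seg_mem_famE g v hv k)
      apply hirr (seg g v k) hsegmem
      rw [← Set.insert_diff_singleton_comm hbne (famE g)]
      exact catch_lemma g hv hflip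
  · have hsub2 : famE g ⊆ Set.range (fun x : W × ℕ => seg g x.1 x.2) := by
      rintro s ⟨v, _, n, rfl⟩
      exact ⟨(v, n), rfl⟩
    calc #(famE g) ≤ #(Set.range (fun x : W × ℕ => seg g x.1 x.2)) :=
          Cardinal.mk_le_mk_of_subset hsub2
    _ ≤ #(W × ℕ) := Cardinal.mk_range_le
    _ = #W * #ℕ := by rw [Cardinal.mk_prod, Cardinal.lift_id, Cardinal.lift_id]
    _ = Cardinal.aleph 1 * Cardinal.aleph0 := by rw [mk_W, Cardinal.mk_nat]
    _ = Cardinal.aleph 1 := by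
          rw [Cardinal.mul_eq_max (Cardinal.aleph0_le_aleph 1) le_rfl]
          exact max_eq_left (Cardinal.aleph0_le_aleph 1)

theorem irrMM_eq_aleph1_of_small (Bs : Set (Set W)) (hsub : IsSubalg Bs)
    (hA : finCofin ⊆ Bs) (hdich : Dichot Bs) (hsize : #Bs < dW) :
    irrMMIn Bs = Cardinal.aleph 1 := by
  obtain ⟨E, hE, hEle⟩ := famE_maxIrred Bs hsub hA hdich hsize
  have hEeq : #E = Cardinal.aleph 1 := le_antisymm hEle (maxIrred_aleph_one_le hA hE)
  rw [irrMMIn]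
  apply le_antisymm
  · exact csInf_le' ⟨E, hE, hEeq⟩
  · have hne : {c | ∃ E, MaxIrredIn Bs E ∧ #E = c}.Nonempty := ⟨Cardinal.aleph 1, E, hE, hEeq⟩
    apply le_csInf hne
    rintro c ⟨E', hE', rfl⟩
    exact maxIrred_aleph_one_le hA hE'
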